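/- Let A, B, C be subspaces of E, let 𝒪 be an E-orbit in X²_{AB} and 𝒪' an E-orbit in X²_{BC} with p₂𝒪 = p₁𝒪' = o'. For (x,z) ∈ 𝒪 • 𝒪', the nonempty set Z_{x,z} := {y ∈ o' : (x,y) ∈ 𝒪, (y,z) ∈ 𝒪'} has cardinality |Z_{x,z}| = |U_{ABC}| / (|A∩B| · |B∩C|); in particular this cardinality is independent of (x,z). -/

import Mathlib

open scoped Classical

set_option linter.unusedSectionVars false

noncomputable section

namespace Lusztig

variable (E X : Type) [AddCommGroup E] [Module (ZMod 2) E] [Fintype E]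
  [Fintype X] [AddAction E X]

/-- The stabilizer of `x` in `E`, as a subset of `E`. -/
def stabSet (x : X) : Set E := {e : E | e +ᵥ x = x}

/-- `X_A`: the set of points of `X` whose stabilizer in `E` equals `A`. -/
def XA (A : Submodule (ZMod 2) E) : Set X := {x : X | stabSet E X x = (A : Set E)}

/-- `X²_{AB} = X_A × X_B`. -/
def X2 (A B : Submodule (ZMod 2) E) : Set (X × X) := (XA E X A) ×ˢ (XA E X B)

/-- The `E`-orbit of `x` in `X`. -/
def orb (x : X) : Set X := {y : X | ∃ e : E, y = e +ᵥ x}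

/-- The `E`-orbit of `(x,y)` for the diagonal action of `E` on `X × X`. -/
def orb2 (x y : X) : Set (X × X) := {q : X × X | ∃ e : E, q = (e +ᵥ x, e +ᵥ y)}

/-- `O` is an `E`-orbit (for the diagonal action) contained in `X²_{AB}`. -/
def IsOrb2 (A B : Submodule (ZMod 2) E) (O : Set (X × X)) : Prop :=
  ∃ x y : X, x ∈ XA E X A ∧ y ∈ XA E X B ∧ O = orb2 E X x y

/-- The `E × B`-orbit of `(x,y)` for the action `(e,b)·(x,y) = (e+b+x, e+y)`. -/
def orbEB (B : Submodule (ZMod 2) E) (x y : X) : Set (X × X) :=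
  {q : X × X | ∃ e b : E, b ∈ B ∧ q = ((e + b) +ᵥ x, e +ᵥ y)}

/-- `M` is an `E × B`-orbit contained in `X²_{AC}` for the action
`(e,b)·(x,y) = (e+b+x, e+y)`. -/
def IsOrbEB (A B C : Submodule (ZMod 2) E) (M : Set (X × X)) : Prop :=
  ∃ x y : X, x ∈ XA E X A ∧ y ∈ XA E X C ∧ M = orbEB E X B x y

/-- Image under the first projection. -/
def p1 (S : Set (X × X)) : Set X := Prod.fst '' S

/-- Image under the second projection. -/
def p2 (S : Set (X × X)) : Set X := Prod.snd '' S

/-- `U_{ABC} = {(a,b,c) ∈ A × B × C : a + b + c = 0}`. -/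
def UABC (A B C : Submodule (ZMod 2) E) : Set (E × E × E) :=
  {t : E × E × E | t.1 ∈ A ∧ t.2.1 ∈ B ∧ t.2.2 ∈ C ∧ t.1 + t.2.1 + t.2.2 = 0}

/-- `X̄_C`: the set of `E`-orbits contained in `X_C`. -/
def barX (C : Submodule (ZMod 2) E) : Set (Set X) :=
  {s : Set X | ∃ x ∈ XA E X C, s = orb E X x}

/-- The dual (space of linear forms `P → ℤ/2`) of a subspace `P` of `E`. -/
abbrev Dl (P : Submodule (ZMod 2) E) : Type := ↥P →ₗ[ZMod 2] ZMod 2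

/-- Restriction of a linear form along an inclusion of subspaces. -/
def res {P Q : Submodule (ZMod 2) E} (h : P ≤ Q) (φ : Dl E Q) : Dl E P :=
  φ.comp (Submodule.inclusion h)

theorem leAB (A B C : Submodule (ZMod 2) E) : A ⊓ B ⊓ C ≤ A ⊓ B := inf_le_left
theorem leBC (A B C : Submodule (ZMod 2) E) : A ⊓ B ⊓ C ≤ B ⊓ C :=
  le_inf (inf_le_left.trans inf_le_right) inf_le_right
theorem leAC (A B C : Submodule (ZMod 2) E) : A ⊓ B ⊓ C ≤ A ⊓ C :=
  le_inf (inf_le_left.trans inf_le_left) inf_le_right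
theorem leBA (A B : Submodule (ZMod 2) E) : A ⊓ B ≤ B ⊓ A := le_inf inf_le_right inf_le_left

/-- The convolution product `𝓕_{AB} × 𝓕_{BC} → 𝓕_{AC}`. -/
def conv (A B C : Submodule (ZMod 2) E)
    (f₁ : (X × X) × Dl E (A ⊓ B) → ℂ) (f₂ : (X × X) × Dl E (B ⊓ C) → ℂ) :
    (X × X) × Dl E (A ⊓ C) → ℂ :=
  fun p =>
    (∑ᶠ (y : X) (_ : y ∈ XA E X B) (ε₁ : Dl E (A ⊓ B)) (ε₂ : Dl E (B ⊓ C))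
        (_ : res E (leAB E A B C) ε₁ + res E (leBC E A B C) ε₂
              + res E (leAC E A B C) p.2 = 0),
        f₁ ((p.1.1, y), ε₁) * f₂ ((y, p.1.2), ε₂)) *
      (Nat.card ↥(A ⊓ B ⊓ C) : ℂ) / (Nat.card ↥(A ⊓ C) : ℂ)

/-- The defining conditions for membership in `𝓕_{AB}`: supported on `X²_{AB}` and
invariant under the diagonal `E`-action. -/
def MemF (A B : Submodule (ZMod 2) E) (f : (X × X) × Dl E (A ⊓ B) → ℂ) : Prop :=
  (∀ p : (X × X) × Dl E (A ⊓ B), p.1 ∉ X2 E X A B → f p = 0) ∧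
  (∀ (e : E) (x y : X) (ε : Dl E (A ⊓ B)), f ((e +ᵥ x, e +ᵥ y), ε) = f ((x, y), ε))

/-- `𝓕_{AB}` as a subspace of the space of all functions. -/
def FAB (A B : Submodule (ZMod 2) E) : Submodule ℂ ((X × X) × Dl E (A ⊓ B) → ℂ) where
  carrier := {f | MemF E X A B f}
  add_mem' := by
    intro a b ha hb
    exact ⟨fun p hp => by simp [ha.1 p hp, hb.1 p hp],
      fun e x y ε => by simp [Pi.add_apply, ha.2 e x y ε, hb.2 e x y ε]⟩
  zero_mem' := ⟨fun p hp => rfl, fun e x y ε => rfl⟩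
  smul_mem' := by
    intro c a ha
    exact ⟨fun p hp => by simp [Pi.smul_apply, ha.1 p hp],
      fun e x y ε => by simp [Pi.smul_apply, ha.2 e x y ε]⟩

/-- `[Ξ]^ε`. -/
def br (A B : Submodule (ZMod 2) E) (Ξ : Set (X × X)) (ε : Dl E (A ⊓ B)) :
    (X × X) × Dl E (A ⊓ B) → ℂ :=
  fun p => if p.1 ∈ Ξ ∧ p.2 = ε then 1 else 0

/-- The ambient space of `𝓕 = ⊕_{A,B} 𝓕_{AB}` (all summands at once). -/
abbrev FF : Type := ∀ A B : Submodule (ZMod 2) E, (X × X) × Dl E (A ⊓ B) → ℂ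

/-- The embedding of the `(A,B)` summand into `𝓕`. -/
def emb (A B : Submodule (ZMod 2) E) (f : (X × X) × Dl E (A ⊓ B) → ℂ) : FF E X :=
  fun A' B' p =>
    if h : A = A' ∧ B = B' then f (p.1, cast (by rw [h.1, h.2]) p.2) else 0

/-- `𝓕` as a subspace of `FF`: componentwise supported on `X²_{AB}` and `E`-invariant. -/
def FFsub : Submodule ℂ (FF E X) where
  carrier := {g | ∀ A B, MemF E X A B (g A B)}
  add_mem' := by
    intro a b ha hb A B
    exact ⟨fun p hp => by simp [(ha A B).1 p hp, (hb A B).1 p hp],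
      fun e x y ε => by simp [(ha A B).2 e x y ε, (hb A B).2 e x y ε]⟩
  zero_mem' := fun A B => ⟨fun p hp => rfl, fun e x y ε => rfl⟩
  smul_mem' := by
    intro c a ha A B
    exact ⟨fun p hp => by simp [(ha A B).1 p hp],
      fun e x y ε => by simp [(ha A B).2 e x y ε]⟩

/-- The product on `𝓕` (zero between summands `𝓕_{AB}`, `𝓕_{B'C}` with `B ≠ B'`). -/
def mulFF (g h : FF E X) : FF E X :=
  fun A C => ∑ᶠ B : Submodule (ZMod 2) E, conv E X A B C (g A B) (h B C)

/-- The diagonal `Δ_A ⊆ X²_{AA}`. -/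
def diagSet (A : Submodule (ZMod 2) E) : Set (X × X) :=
  {q : X × X | q.1 ∈ XA E X A ∧ q.2 = q.1}

/-- The element `∑_A [Δ_A]^0` of `𝓕`. -/
def unitFF : FF E X :=
  ∑ᶠ A : Submodule (ZMod 2) E, emb E X A A (br E X A A (diagSet E X A) 0)

/-- The map `f ↦ f^#` on `𝓕`. -/
def shFF (g : FF E X) : FF E X :=
  fun A B p => g B A ((p.1.2, p.1.1), res E (leBA E B A) p.2)

/-- `𝒪 • 𝒪'`. -/
def bullet (O O' : Set (X × X)) : Set (X × X) :=
  {q : X × X | ∃ y : X, (q.1, y) ∈ O ∧ (y, q.2) ∈ O'}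

/-- `∑_{ε ∈ α̃} [𝓜]^ε ∈ 𝓕_{AC}`, where `α̃` is the fibre of
`(A∩C)* → (A∩B∩C)*` over `α`. -/
def bSum (A B C : Submodule (ZMod 2) E) (M : Set (X × X)) (α : Dl E (A ⊓ B ⊓ C)) :
    (X × X) × Dl E (A ⊓ C) → ℂ :=
  ∑ᶠ (ε : Dl E (A ⊓ C)) (_ : res E (leAC E A B C) ε = α), br E X A C M ε

/-- The set `𝓑_{oBC} ⊆ 𝓕` (embedded in `FF`). -/
def BoBC (A B C : Submodule (ZMod 2) E) (o : Set X) : Set (FF E X) :=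
  {g | ∃ (M : Set (X × X)) (α : Dl E (A ⊓ B ⊓ C)),
      IsOrbEB E X A B C M ∧ p1 X M = o ∧ g = emb E X A C (bSum E X A B C M α)}

/-- The set `𝓑_{oB} = ⊔_C 𝓑_{oBC}`. -/
def BoB (A B : Submodule (ZMod 2) E) (o : Set X) : Set (FF E X) :=
  ⋃ C : Submodule (ZMod 2) E, BoBC E X A B C o

/-- `[[oB]]`, the `ℂ`-span of `𝓑_{oB}`. -/
def ooB (A B : Submodule (ZMod 2) E) (o : Set X) : Submodule ℂ (FF E X) :=
  Submodule.span ℂ (BoB E X A B o)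

lemma add_self_zero (e : E) : e + e = 0 := by
  have h := two_smul (ZMod 2) e
  rw [show (2 : ZMod 2) = 0 by decide, zero_smul] at h
  exact h.symm

lemma eq_of_add_eq_zero' {e f : E} (h : e + f = 0) : e = f := by
  calc e = e + 0 := by rw [add_zero]
    _ = e + (f + f) := by rw [add_self_zero]
    _ = (e + f) + f := by rw [add_assoc]
    _ = 0 + f := by rw [h]
    _ = f := by rw [zero_add]

lemma nsmul2 (e : E) : (2 : ℕ) • e = 0 := by
  rw [two_nsmul]; exact add_self_zero E e

lemma zsmul2 (e : E) : (2 : ℤ) • e = 0 := by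
  rw [two_zsmul]; exact add_self_zero E e

lemma stab_vadd (e : E) (y : X) : stabSet E X (e +ᵥ y) = stabSet E X y := by
  ext f
  simp only [stabSet, Set.mem_setOf_eq]
  have key : f +ᵥ (e +ᵥ y) = e +ᵥ (f +ᵥ y) := by
    rw [← add_vadd, ← add_vadd, add_comm]
  rw [key]
  constructor
  · intro h
    have := congrArg (fun u => (-e) +ᵥ u) h
    simpa [← add_vadd] using this
  · intro h
    rw [h]

lemma mem_orb2_right {A : Submodule (ZMod 2) E} {x₀ y₀ : X}
    (hx₀ : stabSet E X x₀ = (A : Set E)) (e₀ : E) (y : X) :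
    (e₀ +ᵥ x₀, y) ∈ orb2 E X x₀ y₀ ↔ ∃ a ∈ A, y = a +ᵥ (e₀ +ᵥ y₀) := by
  constructor
  · rintro ⟨e, he⟩
    rw [Prod.mk.injEq] at he
    obtain ⟨h1, h2⟩ := he
    refine ⟨e + e₀, ?_, ?_⟩
    · rw [← SetLike.mem_coe, ← hx₀]
      show (e + e₀) +ᵥ x₀ = x₀
      rw [add_vadd, h1, ← add_vadd, add_self_zero, zero_vadd]
    · rw [h2, ← add_vadd, add_assoc, add_self_zero, add_zero]
  · rintro ⟨a, ha, hy⟩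
    refine ⟨a + e₀, ?_⟩
    rw [Prod.mk.injEq]
    constructor
    · have haS : a ∈ stabSet E X (e₀ +ᵥ x₀) := by
        rw [stab_vadd, hx₀]; exact ha
      rw [add_vadd]
      exact haS.symm
    · rw [hy, add_vadd]

lemma mem_orb2_left {C : Submodule (ZMod 2) E} {y₁ z₁ : X}
    (hz₁ : stabSet E X z₁ = (C : Set E)) (e₁ : E) (y : X) :
    (y, e₁ +ᵥ z₁) ∈ orb2 E X y₁ z₁ ↔ ∃ c ∈ C, y = c +ᵥ (e₁ +ᵥ y₁) := by
  constructor
  · rintro ⟨e, he⟩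
    rw [Prod.mk.injEq] at he
    obtain ⟨h1, h2⟩ := he
    refine ⟨e + e₁, ?_, ?_⟩
    · rw [← SetLike.mem_coe, ← hz₁]
      show (e + e₁) +ᵥ z₁ = z₁
      rw [add_vadd, h2, ← add_vadd, add_self_zero, zero_vadd]
    · rw [h1, ← add_vadd, add_assoc, add_self_zero, add_zero]
  · rintro ⟨c, hc, hy⟩
    refine ⟨c + e₁, ?_⟩
    rw [Prod.mk.injEq]
    constructor
    · rw [hy, add_vadd]
    · have hcS : c ∈ stabSet E X (e₁ +ᵥ z₁) := by
        rw [stab_vadd, hz₁]; exact hc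
      rw [add_vadd]
      exact hcS.symm

lemma card_key (A B C : Submodule (ZMod 2) E) (w : X)
    (hw : stabSet E X w = (B : Set E)) (Z : Set X)
    (hZ : ∀ y, y ∈ Z ↔ (∃ a ∈ A, y = a +ᵥ w) ∧ (∃ c ∈ C, y = c +ᵥ w)) :
    Nat.card ↥(UABC E A B C)
      = Nat.card ↥Z * (Nat.card ↥(A ⊓ B) * Nat.card ↥(B ⊓ C)) := by
  have hBS : ∀ b : E, b ∈ B → b +ᵥ w = w := by
    intro b hb
    have : b ∈ stabSet E X w := by rw [hw]; exact hb
    exact this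
  have hBS' : ∀ b : E, b +ᵥ w = w → b ∈ B := by
    intro b hb
    have : b ∈ stabSet E X w := hb
    rwa [hw] at this
  have spec : ∀ y : ↥Z, ∃ a c : E, a ∈ A ∧ c ∈ C ∧ (y : X) = a +ᵥ w ∧ (y : X) = c +ᵥ w := by
    intro y
    obtain ⟨⟨a, ha, hya⟩, ⟨c, hc, hyc⟩⟩ := (hZ y).mp y.2
    exact ⟨a, c, ha, hc, hya, hyc⟩
  choose a c ha hc hya hyc using spec
  have hb : ∀ y : ↥Z, a y + c y ∈ B := by
    intro y
    apply hBS'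
    rw [add_vadd, ← hyc y, hya y, ← add_vadd, add_self_zero, zero_vadd]
  have habmem : ∀ q : ↥Z × ↥(A ⊓ B) × ↥(B ⊓ C),
      (a q.1 + (q.2.1 : E), (a q.1 + c q.1) + (q.2.1 : E) + (q.2.2 : E),
        c q.1 + (q.2.2 : E)) ∈ UABC E A B C := by
    rintro ⟨y, d, t⟩
    have hd := d.2
    have ht := t.2
    rw [Submodule.mem_inf] at hd ht
    refine ⟨A.add_mem (ha y) hd.1, B.add_mem (B.add_mem (hb y) hd.2) ht.1,
      C.add_mem (hc y) ht.2, ?_⟩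
    abel_nf
    rw [show a y + ↑d + (a y + (↑d + (c y + ↑t)) + (c y + ↑t)) = (a y + a y) + ((d : E) + d) + ((c y + t) + (c y + t)) by abel]
    simp only [add_self_zero, add_zero]
  set Ψ : ↥Z × ↥(A ⊓ B) × ↥(B ⊓ C) → ↥(UABC E A B C) :=
    fun q => ⟨_, habmem q⟩ with hΨ
  have hbij : Function.Bijective Ψ := by
    constructor
    · rintro ⟨y, d, t⟩ ⟨y', d', t'⟩ hq
      rw [hΨ, Subtype.mk_eq_mk, Prod.mk.injEq, Prod.mk.injEq] at hq
      obtain ⟨h1, _, h3⟩ := hq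
      have hstaby : ∀ (u : ↥Z) (b : E), b ∈ B → b +ᵥ (u : X) = u := by
        intro u b hbB
        have : b ∈ stabSet E X (u : X) := by
          rw [hya u, stab_vadd, hw]; exact hbB
        exact this
      have hyval : ∀ (u : ↥Z) (d₀ : ↥(A ⊓ B)), (a u + (d₀ : E)) +ᵥ w = (u : X) := by
        intro u d₀
        rw [add_comm, add_vadd, ← hya u]
        exact hstaby u _ (Submodule.mem_inf.mp d₀.2).2
      have hyy : (y : X) = (y' : X) := by
        rw [← hyval y d, ← hyval y' d', h1]
      have hyy' : y = y' := Subtype.ext hyy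
      subst hyy'
      have hdd : (d : E) = (d' : E) := by
        have := h1
        rwa [add_right_inj] at this
      have htt : (t : E) = (t' : E) := by
        have := h3
        rwa [add_right_inj] at this
      exact Prod.ext rfl (Prod.ext (Subtype.ext hdd) (Subtype.ext htt))
    · rintro ⟨⟨ua, ub, uc⟩, hua, hub, huc, hsum⟩
      have hbeq : ua + uc = ub := by
        apply eq_of_add_eq_zero'
        rw [show ua + uc + ub = ua + ub + uc by abel]
        exact hsum
      have hyw : ua +ᵥ w = uc +ᵥ w := by
        conv_lhs => rw [show ua = uc + (ua + uc) by
          rw [add_comm uc, add_assoc, add_self_zero, add_zero]]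
        rw [add_vadd, hbeq, hBS ub hub]
      have hyZ : ua +ᵥ w ∈ Z :=
        (hZ _).mpr ⟨⟨ua, hua, rfl⟩, ⟨uc, huc, hyw⟩⟩
      set Y : ↥Z := ⟨ua +ᵥ w, hyZ⟩ with hY
      have hYa : (Y : X) = a Y +ᵥ w := hya Y
      have hYc : (Y : X) = c Y +ᵥ w := hyc Y
      have hdB : ua + a Y ∈ B := by
        apply hBS'
        rw [add_vadd, ← hYa]
        show ua +ᵥ (Y : X) = w
        rw [hY, ← add_vadd, add_self_zero, zero_vadd]
      have htB : uc + c Y ∈ B := by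
        apply hBS'
        rw [add_vadd, ← hYc]
        show uc +ᵥ (ua +ᵥ w) = w
        rw [hyw, ← add_vadd, add_self_zero, zero_vadd]
      refine ⟨⟨Y, ⟨ua + a Y, Submodule.mem_inf.mpr ⟨A.add_mem hua (ha Y), hdB⟩⟩,
        ⟨uc + c Y, Submodule.mem_inf.mpr ⟨htB, C.add_mem huc (hc Y)⟩⟩⟩, ?_⟩
      rw [hΨ]
      apply Subtype.ext
      show (a Y + (ua + a Y), (a Y + c Y) + (ua + a Y) + (uc + c Y),
        c Y + (uc + c Y)) = (ua, ub, uc)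
      rw [Prod.mk.injEq, Prod.mk.injEq]
      refine ⟨?_, ?_, ?_⟩
      · rw [add_comm ua, ← add_assoc, add_self_zero, zero_add]
      · rw [← hbeq]
        abel_nf
        simp [nsmul2, zsmul2]
      · rw [add_comm uc, ← add_assoc, add_self_zero, zero_add]
  calc Nat.card ↥(UABC E A B C) = Nat.card (↥Z × ↥(A ⊓ B) × ↥(B ⊓ C)) :=
        (Nat.card_eq_of_bijective Ψ hbij).symm
    _ = Nat.card ↥Z * (Nat.card ↥(A ⊓ B) * Nat.card ↥(B ⊓ C)) := by
        rw [Nat.card_prod, Nat.card_prod]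


/-- for `(x,z) ∈ 𝒪 • 𝒪'`, the set `Z_{x,z}` is nonempty and
`|Z_{x,z}| = |U_{ABC}|/(|A∩B|·|B∩C|)`, independently of `(x,z)`. -/
theorem statement7 (A B C : Submodule (ZMod 2) E) (O O' : Set (X × X))
    (hO : IsOrb2 E X A B O) (hO' : IsOrb2 E X B C O')
    (h : p2 X O = p1 X O') (x z : X) (hxz : (x, z) ∈ bullet X O O') :
    {y : X | y ∈ p2 X O ∧ (x, y) ∈ O ∧ (y, z) ∈ O'}.Nonempty ∧
    (Nat.card ↥{y : X | y ∈ p2 X O ∧ (x, y) ∈ O ∧ (y, z) ∈ O'} : ℚ) =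
      (Nat.card ↥(UABC E A B C) : ℚ)
        / ((Nat.card ↥(A ⊓ B) : ℚ) * (Nat.card ↥(B ⊓ C) : ℚ)) := by
  obtain ⟨x₀, y₀, hx₀, hy₀, hOeq⟩ := hO
  obtain ⟨y₁, z₁, hy₁, hz₁, hO'eq⟩ := hO'
  obtain ⟨w, hxw, hwz⟩ := hxz
  have hx₀' : stabSet E X x₀ = (A : Set E) := hx₀
  have hy₀' : stabSet E X y₀ = (B : Set E) := hy₀
  have hz₁' : stabSet E X z₁ = (C : Set E) := hz₁
  have hxw2 : (x, w) ∈ orb2 E X x₀ y₀ := by rw [← hOeq]; exact hxw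
  have hwz2 : (w, z) ∈ orb2 E X y₁ z₁ := by rw [← hO'eq]; exact hwz
  obtain ⟨e₀, he₀⟩ := hxw2
  obtain ⟨e₁, he₁⟩ := hwz2
  rw [Prod.mk.injEq] at he₀ he₁
  obtain ⟨hxe, hwe⟩ := he₀
  obtain ⟨hwe', hze⟩ := he₁
  have hR : ∀ y : X, (x, y) ∈ O ↔ ∃ a ∈ A, y = a +ᵥ w := by
    intro y
    rw [hOeq, hxe, hwe]
    exact mem_orb2_right E X hx₀' e₀ y
  have hL : ∀ y : X, (y, z) ∈ O' ↔ ∃ c ∈ C, y = c +ᵥ w := by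
    intro y
    rw [hO'eq, hze, hwe']
    exact mem_orb2_left E X hz₁' e₁ y
  have hstabw : stabSet E X w = (B : Set E) := by
    rw [hwe, stab_vadd, hy₀']
  have hp2 : ∀ y : X, (x, y) ∈ O → y ∈ p2 X O := fun y hy => ⟨(x, y), hy, rfl⟩
  have hZchar : ∀ y : X, y ∈ {y : X | y ∈ p2 X O ∧ (x, y) ∈ O ∧ (y, z) ∈ O'} ↔
      ((∃ a ∈ A, y = a +ᵥ w) ∧ (∃ c ∈ C, y = c +ᵥ w)) := by
    intro y
    constructor
    · rintro ⟨-, h1, h2⟩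
      exact ⟨(hR y).mp h1, (hL y).mp h2⟩
    · rintro ⟨h1, h2⟩
      have h1' := (hR y).mpr h1
      exact ⟨hp2 y h1', h1', (hL y).mpr h2⟩
  constructor
  · exact ⟨w, hp2 w hxw, hxw, hwz⟩
  · have hcard := card_key E X A B C w hstabw _ hZchar
    rw [hcard]
    have hm : (0 : ℚ) < (Nat.card ↥(A ⊓ B) : ℚ) := by
      exact_mod_cast Nat.card_pos
    have hn : (0 : ℚ) < (Nat.card ↥(B ⊓ C) : ℚ) := by
      exact_mod_cast Nat.card_pos
    have hmn : ((Nat.card ↥(A ⊓ B) : ℚ) * (Nat.card ↥(B ⊓ C) : ℚ)) ≠ 0 :=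
      ne_of_gt (mul_pos hm hn)
    push_cast
    exact (mul_div_cancel_right₀ _ hmn).symm


end Lusztig
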